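/- Let a₁, a₂ ≥ 2 be natural numbers and λ₁, λ₂ nonzero complex numbers. Define h : ℂ² → ℂ by h(z₁,z₂) = λ₁ z₁^{a₁}·conj(z₁) + λ₂ z₂^{a₂}·conj(z₂), and F(z) = (λ₁ z₁^{a₁}, λ₂ z₂^{a₂}) ∈ ℂ². Then for every z ∈ ℂ² with z ≠ 0 and h(z) = 0, and every nonzero vector v in the real span of {F(z), i·F(z)}, the real Fréchet derivative of h at z applied to v is nonzero; i.e. the real span of {F(z), i·F(z)} meets the kernel of Dh_z (an ℝ-linear map ℂ² → ℂ) only in 0. -/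

import Mathlib

open Complex

lemma myterm13 (l : ℂ) (b : ℕ) (w : ℂ) :
    HasFDerivAt (fun w : ℂ => l * w ^ (b + 2) * (starRingEnd ℂ) w)
      (((l * w ^ (b+2)) • (Complex.conjCLE.toContinuousLinearMap : ℂ →L[ℝ] ℂ))
        + (((starRingEnd ℂ) w) • ((ContinuousLinearMap.smulRight (1 : ℂ →L[ℂ] ℂ)
             (l * ((b:ℂ)+2) * w^(b+1))).restrictScalars ℝ))) w := by
  have h1 : HasDerivAt (fun w : ℂ => l * w ^ (b+2)) (l * ((b:ℂ)+2) * w^(b+1)) w := by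
    have := (hasDerivAt_pow (b+2) w).const_mul l
    refine this.congr_deriv ?_
    push_cast
    ring
  have h2 : HasFDerivAt (fun w : ℂ => (starRingEnd ℂ) w)
      (Complex.conjCLE.toContinuousLinearMap : ℂ →L[ℝ] ℂ) w :=
    Complex.conjCLE.toContinuousLinearMap.hasFDerivAt
  exact (h1.hasFDerivAt.restrictScalars ℝ).mul h2

lemma myfderiv13 (l₁ l₂ : ℂ) (b₁ b₂ : ℕ) (h : ℂ × ℂ → ℂ)
    (hh : ∀ z : ℂ × ℂ,
      h z = l₁ * z.1 ^ (b₁+2) * (starRingEnd ℂ) z.1 + l₂ * z.2 ^ (b₂+2) * (starRingEnd ℂ) z.2)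
    (z v : ℂ × ℂ) :
    fderiv ℝ h z v = (l₁ * z.1 ^ (b₁+2)) * (starRingEnd ℂ) v.1
      + (starRingEnd ℂ) z.1 * (v.1 * (l₁ * ((b₁:ℂ)+2) * z.1^(b₁+1)))
      + ((l₂ * z.2 ^ (b₂+2)) * (starRingEnd ℂ) v.2
      + (starRingEnd ℂ) z.2 * (v.2 * (l₂ * ((b₂:ℂ)+2) * z.2^(b₂+1)))) := by
  have H1 := (myterm13 l₁ b₁ z.1).comp z (hasFDerivAt_fst (p := z))
  have H2 := (myterm13 l₂ b₂ z.2).comp z (hasFDerivAt_snd (p := z))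
  have heq : h = fun z : ℂ × ℂ => (((fun w : ℂ => l₁ * w ^ (b₁+2) * (starRingEnd ℂ) w) ∘ Prod.fst) z)
      + (((fun w : ℂ => l₂ * w ^ (b₂+2) * (starRingEnd ℂ) w) ∘ Prod.snd) z) := funext hh
  erw [heq, (H1.add H2).fderiv]
  simp [ContinuousLinearMap.add_apply, ContinuousLinearMap.coe_comp', Function.comp,
    ContinuousLinearMap.smul_apply, ContinuousLinearMap.coe_restrictScalars,
    ContinuousLinearMap.smulRight_apply, ContinuousLinearMap.one_apply, smul_eq_mul,
    Complex.conjCLE_apply]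



/-- Example 2.5, case i): for the foliation of `ℂ²` defined by the diagonal vector field
`F(z) = (λ₁z₁^{a₁}, λ₂z₂^{a₂})`, the polar variety with respect to `Q(z) = |z₁|² + |z₂|²`
is the zero set of `h(z) = λ₁z₁^{a₁}·conj(z₁) + λ₂z₂^{a₂}·conj(z₂)`, and at every point
`z ≠ 0` of it the real span of `{F(z), i·F(z)}` (the tangent space of the leaf) meets the
kernel of the real Fréchet derivative of `h` only in `0`: the foliation is transversal to
the polar variety away from the origin. -/
theorem stmt13 (a₁ a₂ : ℕ) (ha₁ : 2 ≤ a₁) (ha₂ : 2 ≤ a₂) (l₁ l₂ : ℂ)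
    (hl₁ : l₁ ≠ 0) (hl₂ : l₂ ≠ 0)
    (h : ℂ × ℂ → ℂ)
    (hh : ∀ z : ℂ × ℂ,
      h z = l₁ * z.1 ^ a₁ * (starRingEnd ℂ) z.1 + l₂ * z.2 ^ a₂ * (starRingEnd ℂ) z.2)
    (F : ℂ × ℂ → ℂ × ℂ)
    (hF : ∀ z : ℂ × ℂ, F z = (l₁ * z.1 ^ a₁, l₂ * z.2 ^ a₂)) :
    ∀ z : ℂ × ℂ, z ≠ 0 → h z = 0 →
      ∀ v ∈ Submodule.span ℝ {F z, Complex.I • F z}, fderiv ℝ h z v = 0 → v = 0 := by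
  obtain ⟨b₁, rfl⟩ : ∃ b, a₁ = b + 2 := ⟨a₁ - 2, by omega⟩
  obtain ⟨b₂, rfl⟩ : ∃ b, a₂ = b + 2 := ⟨a₂ - 2, by omega⟩
  intro z hz hz0 v hv hdv
  have hzh := hz0
  rw [hh] at hzh
  -- both coordinates are nonzero
  have hz1 : z.1 ≠ 0 := by
    intro h1
    have e : l₂ * z.2 ^ (b₂+2) * (starRingEnd ℂ) z.2 = 0 := by
      rw [h1] at hzh; simpa using hzh
    have h2 : z.2 = 0 := by
      rcases mul_eq_zero.mp e with h' | h'
      · rcases mul_eq_zero.mp h' with h'' | h''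
        · exact absurd h'' hl₂
        · exact pow_eq_zero_iff (by omega) |>.mp h''
      · simpa using h'
    exact hz (Prod.ext_iff.mpr ⟨h1, h2⟩)
  have hz2 : z.2 ≠ 0 := by
    intro h2
    have e : l₁ * z.1 ^ (b₁+2) * (starRingEnd ℂ) z.1 = 0 := by
      rw [h2] at hzh; simpa using hzh
    have h1 : z.1 = 0 := by
      rcases mul_eq_zero.mp e with h' | h'
      · rcases mul_eq_zero.mp h' with h'' | h''
        · exact absurd h'' hl₁
        · exact pow_eq_zero_iff (by omega) |>.mp h''
      · simpa using h'
    exact hz (Prod.ext_iff.mpr ⟨h1, h2⟩)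
  have hw₁ : l₁ * z.1 ^ (b₁+2) ≠ 0 := by
    exact mul_ne_zero hl₁ (pow_ne_zero _ hz1)
  have hw₂ : l₂ * z.2 ^ (b₂+2) ≠ 0 := by
    exact mul_ne_zero hl₂ (pow_ne_zero _ hz2)
  -- express v as a complex multiple of F z
  rw [Submodule.mem_span_pair] at hv
  obtain ⟨α, β, hv⟩ := hv
  set c : ℂ := (α : ℂ) + (β : ℂ) * Complex.I with hc
  have hv1 : v.1 = c * (l₁ * z.1 ^ (b₁+2)) := by
    rw [← hv]
    show α • (F z).1 + β • (Complex.I • F z).1 = _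
    simp [hF, Complex.real_smul, smul_eq_mul, hc]
    ring
  have hv2 : v.2 = c * (l₂ * z.2 ^ (b₂+2)) := by
    rw [← hv]
    show α • (F z).2 + β • (Complex.I • F z).2 = _
    simp [hF, Complex.real_smul, smul_eq_mul, hc]
    ring
  -- if c = 0 we are done
  by_cases hc0 : c = 0
  · have : v.1 = 0 := by rw [hv1, hc0, zero_mul]
    have h2 : v.2 = 0 := by rw [hv2, hc0, zero_mul]
    exact Prod.ext_iff.mpr ⟨this, h2⟩
  exfalso
  -- the key equation from the vanishing of the derivative
  have e := hdv
  rw [myfderiv13 l₁ l₂ b₁ b₂ h hh z v, hv1, hv2] at e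
  set A : ℂ := ((b₁:ℂ)+2) * l₁ * z.1^(b₁+1) * (starRingEnd ℂ) z.1 * (l₁ * z.1 ^ (b₁+2))
      + ((b₂:ℂ)+2) * l₂ * z.2^(b₂+1) * (starRingEnd ℂ) z.2 * (l₂ * z.2 ^ (b₂+2)) with hA
  have key : c * A + (starRingEnd ℂ) c
      * ((normSq (l₁ * z.1 ^ (b₁+2)) : ℂ) + (normSq (l₂ * z.2 ^ (b₂+2)) : ℂ)) = 0 := by
    rw [← e, ← Complex.mul_conj, ← Complex.mul_conj, hA]
    simp only [map_mul, map_pow]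
    ring
  -- from key, |A| equals normSq sum
  have hcabs : ‖c‖ ≠ 0 := by simpa using hc0
  have habsA : ‖A‖ = normSq (l₁ * z.1 ^ (b₁+2)) + normSq (l₂ * z.2 ^ (b₂+2)) := by
    have e2 : c * A = -((starRingEnd ℂ) c
        * (((normSq (l₁ * z.1 ^ (b₁+2)) + normSq (l₂ * z.2 ^ (b₂+2)) : ℝ)) : ℂ)) := by
      push_cast
      linear_combination key
    have e3 := congrArg (‖·‖) e2
    rw [norm_mul, norm_neg, norm_mul, Complex.norm_conj, Complex.norm_real,
      Real.norm_of_nonneg (add_nonneg (normSq_nonneg _) (normSq_nonneg _))] at e3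
    exact mul_left_cancel₀ hcabs e3
  -- the polar relation
  have hrel : (l₂ * z.2 ^ (b₂+2)) * (starRingEnd ℂ) z.2
      = -((l₁ * z.1 ^ (b₁+2)) * (starRingEnd ℂ) z.1) := by
    linear_combination hzh
  -- the structural identity for A
  have step1 : A * (z.1 * (starRingEnd ℂ) z.1) * (z.2 * (starRingEnd ℂ) z.2)
      = ((b₁:ℂ)+2) * ((l₁ * z.1 ^ (b₁+2)) * (starRingEnd ℂ) z.1)^2 * (z.2 * (starRingEnd ℂ) z.2)
      + ((b₂:ℂ)+2) * ((l₂ * z.2 ^ (b₂+2)) * (starRingEnd ℂ) z.2)^2 * (z.1 * (starRingEnd ℂ) z.1) := by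
    rw [hA]; ring
  have step2 : ((l₂ * z.2 ^ (b₂+2)) * (starRingEnd ℂ) z.2)^2
      = ((l₁ * z.1 ^ (b₁+2)) * (starRingEnd ℂ) z.1)^2 := by
    rw [hrel]; ring
  rw [step2, Complex.mul_conj, Complex.mul_conj] at step1
  have step3 : A * ((normSq z.1 : ℝ) : ℂ) * ((normSq z.2 : ℝ) : ℂ)
      = ((l₁ * z.1 ^ (b₁+2)) * (starRingEnd ℂ) z.1)^2
        * ((((b₁:ℝ)+2) * normSq z.2 + ((b₂:ℝ)+2) * normSq z.1 : ℝ) : ℂ) := by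
    push_cast
    linear_combination step1
  have habs2 := congrArg (‖·‖) step3
  simp only [norm_mul, norm_pow, Complex.norm_conj, Complex.norm_real] at habs2
  rw [Real.norm_of_nonneg (normSq_nonneg _), Real.norm_of_nonneg (normSq_nonneg _),
    Real.norm_of_nonneg (add_nonneg (mul_nonneg (by positivity) (normSq_nonneg _))
      (mul_nonneg (by positivity) (normSq_nonneg _)))] at habs2
  have hsq1 : (‖l₁‖ * ‖z.1‖ ^ (b₁+2) * ‖z.1‖)^2
      = normSq (l₁ * z.1 ^ (b₁+2)) * normSq z.1 := by
    rw [← Complex.sq_norm, ← Complex.sq_norm, norm_mul, norm_pow]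
    ring
  rw [hsq1, habsA] at habs2
  -- relation between normSq's from the polar relation
  have hPN : normSq (l₁ * z.1 ^ (b₁+2)) * normSq z.1
      = normSq (l₂ * z.2 ^ (b₂+2)) * normSq z.2 := by
    have t := congrArg normSq hrel
    simp only [Complex.normSq_mul, Complex.normSq_conj, Complex.normSq_neg] at t ⊢
    linarith [t]
  -- positivity and conclusion
  have hP1 : 0 < normSq (l₁ * z.1 ^ (b₁+2)) := normSq_pos.mpr hw₁
  have hP2 : 0 < normSq (l₂ * z.2 ^ (b₂+2)) := normSq_pos.mpr hw₂
  have hN1 : 0 < normSq z.1 := normSq_pos.mpr hz1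
  have hN2 : 0 < normSq z.2 := normSq_pos.mpr hz2
  have hb1 : (0:ℝ) ≤ (b₁:ℝ) := Nat.cast_nonneg _
  have hb2 : (0:ℝ) ≤ (b₂:ℝ) := Nat.cast_nonneg _
  nlinarith [mul_pos hN1 hN2, mul_pos hP1 hP2, mul_pos hP1 hN1, mul_pos hP2 hN2,
    mul_pos (mul_pos hP1 hN1) hN2, mul_pos (mul_pos hP2 hN2) hN1,
    mul_nonneg (mul_nonneg hb1 hP1.le) (mul_pos hN1 hN2).le,
    mul_nonneg (mul_nonneg hb2 hP2.le) (mul_pos hN1 hN2).le]
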